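/- Let A be a finite-dimensional split commutative semisimple ℂ-algebra with distinguished basis {b_i} indexed by a finite set I, and suppose all |I| characters φ_1,…,φ_{|I|} of A are distinct. Let Ch be the |I| × |I| matrix with entries Ch_{φ,i} = φ(b_i) (the character table). Suppose there is a conjugate-linear anti-involution ∗ with φ(b*) = conj(φ(b)) and a Frobenius functional λ making {b_i} orthonormal for ⟨a,c⟩ = λ(ac*). Then Ch · conj(Ch)^T is the diagonal matrix with diagonal entries the formal codegrees f_φ; in particular the character table matrix Ch is invertible. -/

import Mathlib

open scoped BigOperators

theorem stmt5 {A : Type*} [CommRing A] [Algebra ℂ A] [FiniteDimensional ℂ A]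
    {ι : Type*} [Fintype ι] [DecidableEq ι]
    (split : A ≃ₐ[ℂ] (ι → ℂ))
    (lam : A →ₗ[ℂ] ℂ)
    (hnd : ∀ a : A, (∀ c : A, lam (a * c) = 0) → a = 0)
    (st : A → A)
    (hst_add : ∀ a c : A, st (a + c) = st a + st c)
    (hst_smul : ∀ (z : ℂ) (a : A), st (z • a) = (starRingEnd ℂ z) • st a)
    (hst_mul : ∀ a c : A, st (a * c) = st c * st a)
    (hst_invol : ∀ a : A, st (st a) = a)
    (b : ι → A) (hb : Module.Basis ι ℂ A) (hbe : ∀ i, hb i = b i)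
    (σ : ι ≃ ι) (hstb : ∀ i, st (b i) = b (σ i))
    (horthonormal : ∀ i j, lam (b i * st (b j)) = if i = j then 1 else 0)
    (hchar_st : ∀ (ψ : A →ₐ[ℂ] ℂ) (a : A), ψ (st a) = starRingEnd ℂ (ψ a))
    (chars : ι → (A →ₐ[ℂ] ℂ))
    (hinj : Function.Injective chars)
    (hall : ∀ ψ : A →ₐ[ℂ] ℂ, ∃ p, chars p = ψ) :
    (Matrix.of fun p i => chars p (b i)) *
        ((Matrix.of fun p i => chars p (b i)).map (starRingEnd ℂ)).transpose =
      Matrix.diagonal (fun p => ∑ i, chars p (b i) * starRingEnd ℂ (chars p (b i))) ∧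
    IsUnit (Matrix.of fun p i => chars p (b i)).det := by
  classical
  have hrepr : ∀ a : A, a = ∑ i, hb.repr a i • b i := by
    intro a
    conv_lhs => rw [← hb.sum_repr a]
    exact Finset.sum_congr rfl fun i _ => by rw [hbe]
  have hcoef : ∀ (a : A) (j : ι), lam (a * st (b j)) = hb.repr a j := by
    intro a j
    conv_lhs => rw [hrepr a]
    rw [Finset.sum_mul, map_sum]
    simp [smul_mul_assoc, horthonormal]
  set β : ι → A := fun p => ∑ i, chars p (b i) • st (b i) with hβ
  have hchar_sum : ∀ (p : ι) (x : A), chars p x = ∑ i, hb.repr x i * chars p (b i) := by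
    intro p x
    conv_lhs => rw [hrepr x]
    rw [map_sum]
    exact Finset.sum_congr rfl fun i _ => by rw [map_smul, smul_eq_mul]
  have hlamβ : ∀ (p : ι) (x : A), lam (x * β p) = chars p x := by
    intro p x
    have h1 : lam (x * β p) = ∑ i, chars p (b i) * hb.repr x i := by
      rw [hβ]
      simp only [Finset.mul_sum, map_sum, mul_smul_comm, map_smul, smul_eq_mul, hcoef]
    rw [h1, hchar_sum p x]
    exact Finset.sum_congr rfl fun i _ => mul_comm _ _
  have heigen : ∀ (p : ι) (a : A), a * β p = chars p a • β p := by
    intro p a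
    have h0 := hnd (a * β p - chars p a • β p) (fun c => by
      have e1 : (a * β p - chars p a • β p) * c
          = (a * c) * β p - chars p a • (c * β p) := by
        rw [sub_mul, mul_right_comm, smul_mul_assoc, mul_comm (β p) c]
      rw [e1, map_sub, map_smul, hlamβ, hlamβ, map_mul, smul_eq_mul, sub_self])
    exact sub_eq_zero.mp h0
  -- value of chars q on β p
  have hqβ : ∀ p q : ι, chars q (β p)
      = ∑ i, chars p (b i) * starRingEnd ℂ (chars q (b i)) := by
    intro p q
    rw [hβ, map_sum]
    exact Finset.sum_congr rfl fun i _ => by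
      rw [map_smul, smul_eq_mul, hchar_st]
  have hortho : ∀ p q : ι, p ≠ q → chars q (β p) = 0 := by
    intro p q hpq
    have hne : chars p ≠ chars q := fun h => hpq (hinj h)
    have : ∃ a : A, chars p a ≠ chars q a := by
      by_contra h
      push_neg at h
      exact hne (AlgHom.ext h)
    obtain ⟨a, ha⟩ := this
    have := congrArg (chars q) (heigen p a)
    rw [map_mul, map_smul, smul_eq_mul] at this
    rcases mul_eq_mul_right_iff.mp this with h | h
    · exact absurd h.symm ha
    · exact h
  -- diagonal entries are nonzero
  have hdiag_ne : ∀ p : ι, (∑ i, chars p (b i) * starRingEnd ℂ (chars p (b i))) ≠ 0 := by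
    intro p h
    have hnorm : ∑ i, Complex.normSq (chars p (b i)) = 0 := by
      have : ((∑ i, Complex.normSq (chars p (b i)) : ℝ) : ℂ) = 0 := by
        rw [Complex.ofReal_sum]
        rw [← h]
        exact Finset.sum_congr rfl fun i _ => (Complex.mul_conj _).symm
      exact_mod_cast this
    have hzero : ∀ i, chars p (b i) = 0 := by
      intro i
      have := (Finset.sum_eq_zero_iff_of_nonneg
        (fun i _ => Complex.normSq_nonneg _)).mp hnorm i (Finset.mem_univ i)
      exact Complex.normSq_eq_zero.mp this
    have h1 : chars p 1 = 0 := by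
      rw [hchar_sum p 1]
      simp [hzero]
    rw [map_one] at h1
    exact one_ne_zero h1
  have hmain : (Matrix.of fun p i => chars p (b i)) *
        ((Matrix.of fun p i => chars p (b i)).map (starRingEnd ℂ)).transpose =
      Matrix.diagonal (fun p => ∑ i, chars p (b i) * starRingEnd ℂ (chars p (b i))) := by
    ext p q
    rw [Matrix.mul_apply]
    simp only [Matrix.of_apply, Matrix.transpose_apply, Matrix.map_apply]
    by_cases hpq : p = q
    · subst hpq
      rw [Matrix.diagonal_apply_eq]
    · rw [Matrix.diagonal_apply_ne _ hpq]
      rw [← hqβ p q, hortho p q hpq]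
  refine ⟨hmain, ?_⟩
  have hdet := congrArg Matrix.det hmain
  rw [Matrix.det_mul, Matrix.det_diagonal] at hdet
  have hne : (Matrix.of fun p i => chars p (b i)).det ≠ 0 := by
    intro h0
    rw [h0, zero_mul] at hdet
    exact Finset.prod_ne_zero_iff.mpr (fun p _ => hdiag_ne p) hdet.symm
  exact isUnit_iff_ne_zero.mpr hne
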